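/- arXiv:2603.19495 — 2 statements merged into one kernel-verified Lean document; each statement's English description precedes it below -/
import Mathlib

section
/- Let R be a commutative ring and let ω ∈ R satisfy ω² + ω + 1 = 0 (so that ω³ = 1 and ω is a unit in R). Then in the ring of formal power series R[[q]] one has the identity ∏_{n≥1} (1−q^n)(1−q^{11n})³(1−ω²q^{11n})(1−ω⁻²q^{11n})(1−ω⁴q^{11n})(1−ω⁻⁴q^{11n})(1−ω⁸q^{11n})(1−ω⁻⁸q^{11n})(1−ω¹⁰q^{11n})(1−ω⁻¹⁰q^{11n}) · ((1−ωq^n)(1−ω⁻¹q^n))⁻¹ = ∏_{n≥1} (1−q^n)²(1−q^{33n})⁴ · ((1−q^{3n})(1−q^{11n}))⁻¹. -/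
open PowerSeries LaurentPolynomial Finset

/-- The factor `1 - c·q^m` of an infinite product, as a formal power series. -/
noncomputable def factor {R : Type*} [CommRing R] (c : R) (m : ℕ) : PowerSeries R :=
  1 - PowerSeries.C c * PowerSeries.X ^ m

/-- The infinite product `∏_{n ≥ 1} f n` in `R[[q]]`, for a sequence of factors in which the
`n`-th factor is congruent to `1` modulo `q^n`: it is defined coefficientwise, the coefficient
of `q^m` being the (stabilized) coefficient of `q^m` in the partial product of the factors with
index `1, …, m+1`, which agrees with the limit of the partial products in the `q`-adic topology. -/
noncomputable def infiniteProd {R : Type*} [CommRing R] (f : ℕ → PowerSeries R) : PowerSeries R :=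
  PowerSeries.mk fun m => PowerSeries.coeff m (∏ n ∈ Finset.range (m + 1), f (n + 1))

lemma ring_inverse_eq {S : Type*} [CommRing S] {a b : S} (h : a * b = 1) :
    Ring.inverse a = b := by
  have hu : IsUnit a := ⟨⟨a, b, h, by rw [mul_comm]; exact h⟩, rfl⟩
  calc Ring.inverse a = Ring.inverse a * (a * b) := by rw [h, mul_one]
    _ = (Ring.inverse a * a) * b := by ring
    _ = b := by rw [Ring.inverse_mul_cancel a hu, one_mul]

lemma cross_mul {S : Type*} [CommRing S] {u v a b : S} (hu : IsUnit u) (hv : IsUnit v)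
    (h : a * v = b * u) : a * Ring.inverse u = b * Ring.inverse v := by
  calc a * Ring.inverse u = a * v * Ring.inverse v * Ring.inverse u := by
        rw [mul_assoc a v, Ring.mul_inverse_cancel v hv, mul_one]
    _ = b * u * Ring.inverse u * Ring.inverse v := by rw [h]; ring
    _ = b * Ring.inverse v := by
        rw [mul_assoc b u, Ring.mul_inverse_cancel u hu, mul_one]

lemma factor_isUnit {R : Type*} [CommRing R] (c : R) (m : ℕ) (hm : 1 ≤ m) :
    IsUnit (factor c m) := by
  rw [PowerSeries.isUnit_iff_constantCoeff]
  obtain ⟨k, rfl⟩ := Nat.exists_eq_add_of_le hm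
  simp [factor, pow_succ]

theorem crank11_product_identity {R : Type*} [CommRing R] (ω : R)
    (hω : ω ^ 2 + ω + 1 = 0) :
    (infiniteProd fun n =>
      factor 1 n *
      factor 1 (11 * n) ^ 3 *
      factor (ω ^ 2) (11 * n) *
      factor (Ring.inverse ω ^ 2) (11 * n) *
      factor (ω ^ 4) (11 * n) *
      factor (Ring.inverse ω ^ 4) (11 * n) *
      factor (ω ^ 8) (11 * n) *
      factor (Ring.inverse ω ^ 8) (11 * n) *
      factor (ω ^ 10) (11 * n) *
      factor (Ring.inverse ω ^ 10) (11 * n) *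
      Ring.inverse (factor (ω) n * factor (Ring.inverse ω) n)) =
    infiniteProd fun n =>
      factor (1 : R) n ^ 2 * factor (1 : R) (33 * n) ^ 4 *
      Ring.inverse (factor (1 : R) (3 * n) * factor (1 : R) (11 * n)) := by
  have h3 : ω ^ 3 = 1 := by linear_combination (ω - 1) * hω
  have hinv : Ring.inverse ω = ω ^ 2 := ring_inverse_eq (by linear_combination h3)
  -- constant simplifications
  have e4 : ω ^ 4 = ω := by linear_combination ω * h3
  have e8 : ω ^ 8 = ω ^ 2 := by linear_combination (ω ^ 5 + ω ^ 2) * h3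
  have e10 : ω ^ 10 = ω := by linear_combination (ω ^ 7 + ω ^ 4 + ω) * h3
  have i2 : Ring.inverse ω ^ 2 = ω := by
    rw [hinv]; linear_combination ω * h3
  have i4 : Ring.inverse ω ^ 4 = ω ^ 2 := by
    rw [hinv]; linear_combination (ω ^ 5 + ω ^ 2) * h3
  have i8 : Ring.inverse ω ^ 8 = ω := by
    rw [hinv]; linear_combination (ω ^ 13 + ω ^ 10 + ω ^ 7 + ω ^ 4 + ω) * h3
  have i10 : Ring.inverse ω ^ 10 = ω ^ 2 := by
    rw [hinv]
    linear_combination (ω ^ 17 + ω ^ 14 + ω ^ 11 + ω ^ 8 + ω ^ 5 + ω ^ 2) * h3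
  -- the key power series identity
  have key : ∀ m : ℕ, factor ω m * factor (ω ^ 2) m * factor (1 : R) m
      = factor (1 : R) (3 * m) := by
    intro m
    simp only [factor, map_pow, map_one, one_mul]
    rw [show 3 * m = m * 3 by ring, pow_mul]
    have hC : (PowerSeries.C ω) ^ 2 + PowerSeries.C ω + 1 = 0 := by
      rw [← map_pow, ← map_one (PowerSeries.C (R := R)), ← map_add, ← map_add, hω, map_zero]
    linear_combination (-(PowerSeries.X ^ m) + PowerSeries.C ω * (PowerSeries.X ^ m) ^ 2
      - (PowerSeries.C ω - 1) * (PowerSeries.X ^ m) ^ 3) * hC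
  -- factorwise equality
  have hfac : ∀ k : ℕ,
      (factor 1 (k+1) *
      factor 1 (11 * (k+1)) ^ 3 *
      factor (ω ^ 2) (11 * (k+1)) *
      factor (Ring.inverse ω ^ 2) (11 * (k+1)) *
      factor (ω ^ 4) (11 * (k+1)) *
      factor (Ring.inverse ω ^ 4) (11 * (k+1)) *
      factor (ω ^ 8) (11 * (k+1)) *
      factor (Ring.inverse ω ^ 8) (11 * (k+1)) *
      factor (ω ^ 10) (11 * (k+1)) *
      factor (Ring.inverse ω ^ 10) (11 * (k+1)) *
      Ring.inverse (factor (ω) (k+1) * factor (Ring.inverse ω) (k+1))) =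
      factor (1 : R) (k+1) ^ 2 * factor (1 : R) (33 * (k+1)) ^ 4 *
      Ring.inverse (factor (1 : R) (3 * (k+1)) * factor (1 : R) (11 * (k+1))) := by
    intro k
    set n := k + 1 with hn
    have hn1 : 1 ≤ n := Nat.le_add_left 1 k
    have h11 : 1 ≤ 11 * n := le_trans hn1 (Nat.le_mul_of_pos_left n (by norm_num))
    have h3n : 1 ≤ 3 * n := le_trans hn1 (Nat.le_mul_of_pos_left n (by norm_num))
    rw [i2, i4, i8, i10, e4, e8, e10, hinv]
    have hu : IsUnit (factor ω n * factor (ω ^ 2) n) :=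
      (factor_isUnit ω n hn1).mul (factor_isUnit (ω ^ 2) n hn1)
    have hv : IsUnit (factor (1 : R) (3 * n) * factor (1 : R) (11 * n)) :=
      (factor_isUnit _ _ h3n).mul (factor_isUnit _ _ h11)
    refine cross_mul hu hv ?_
    have K11 : factor ω (11 * n) * factor (ω ^ 2) (11 * n) * factor (1 : R) (11 * n)
        = factor (1 : R) (33 * n) := by
      have := key (11 * n); rwa [show 3 * (11 * n) = 33 * n by ring] at this
    rw [← K11, ← key n]
    ring
  -- assemble
  unfold infiniteProd
  ext m
  simp only [coeff_mk]
  refine congrArg _ (Finset.prod_congr rfl fun n _ => ?_)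
  exact hfac n
end

section
/- Let R be a commutative ring and let ω ∈ R satisfy ω² + ω + 1 = 0 (so that ω³ = 1 and ω is a unit in R). Then in the ring of formal power series R[[q]] one has the identity ∏_{n≥1} (1−q^n)(1−q^{17n})⁵(1−ω²q^{17n})(1−ω⁻²q^{17n})(1−ω⁴q^{17n})(1−ω⁻⁴q^{17n})(1−ω⁸q^{17n})(1−ω⁻⁸q^{17n})(1−ω¹⁰q^{17n})(1−ω⁻¹⁰q^{17n})(1−ω¹⁴q^{17n})(1−ω⁻¹⁴q^{17n})(1−ω¹⁶q^{17n})(1−ω⁻¹⁶q^{17n}) · ((1−ωq^n)(1−ω⁻¹q^n))⁻¹ = ∏_{n≥1} (1−q^n)²(1−q^{51n})⁶ · ((1−q^{3n})(1−q^{17n}))⁻¹. -/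
open PowerSeries LaurentPolynomial Finset

private lemma isUnit_factor {R : Type*} [CommRing R] (c : R) {m : ℕ} (hm : m ≠ 0) :
    IsUnit (factor c m) := by
  rw [PowerSeries.isUnit_iff_constantCoeff]
  simp [factor, zero_pow hm]

private lemma inv_helper {M₀ : Type*} [CommMonoidWithZero M₀] {u w P Q : M₀}
    (hu : IsUnit u) (hw : IsUnit w) (h : P * w = Q * u) :
    P * Ring.inverse u = Q * Ring.inverse w := by
  calc P * Ring.inverse u = P * Ring.inverse u * (w * Ring.inverse w) := by
        rw [Ring.mul_inverse_cancel _ hw, mul_one]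
    _ = P * w * Ring.inverse u * Ring.inverse w := by ac_rfl
    _ = Q * u * Ring.inverse u * Ring.inverse w := by rw [h]
    _ = Q * (u * Ring.inverse u) * Ring.inverse w := by ac_rfl
    _ = Q * Ring.inverse w := by rw [Ring.mul_inverse_cancel _ hu, mul_one]

private lemma cube_factor {R : Type*} [CommRing R] (ω : R) (hω : ω ^ 2 + ω + 1 = 0) (m : ℕ) :
    factor ω m * factor (ω ^ 2) m * factor (1 : R) m = factor (1 : R) (3 * m) := by
  have h : (PowerSeries.C ω) ^ 2 + PowerSeries.C ω + 1 = 0 := by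
    rw [← map_pow, ← map_one (PowerSeries.C (R := R)), ← map_add, ← map_add, hω, map_zero]
  simp only [factor, map_one, one_mul, map_pow]
  rw [show 3 * m = m * 3 by ring, pow_mul]
  linear_combination (-(PowerSeries.X ^ m) + PowerSeries.C ω * (PowerSeries.X ^ m) ^ 2
    - (PowerSeries.C ω - 1) * (PowerSeries.X ^ m) ^ 3) * h

set_option maxHeartbeats 1600000

theorem crank17_product_identity {R : Type*} [CommRing R] (ω : R)
    (hω : ω ^ 2 + ω + 1 = 0) :
    (infiniteProd fun n =>
      factor 1 n *
      factor 1 (17 * n) ^ 5 *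
      factor (ω ^ 2) (17 * n) *
      factor (Ring.inverse ω ^ 2) (17 * n) *
      factor (ω ^ 4) (17 * n) *
      factor (Ring.inverse ω ^ 4) (17 * n) *
      factor (ω ^ 8) (17 * n) *
      factor (Ring.inverse ω ^ 8) (17 * n) *
      factor (ω ^ 10) (17 * n) *
      factor (Ring.inverse ω ^ 10) (17 * n) *
      factor (ω ^ 14) (17 * n) *
      factor (Ring.inverse ω ^ 14) (17 * n) *
      factor (ω ^ 16) (17 * n) *
      factor (Ring.inverse ω ^ 16) (17 * n) *
      Ring.inverse (factor (ω) n * factor (Ring.inverse ω) n)) =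
    infiniteProd fun n =>
      factor (1 : R) n ^ 2 * factor (1 : R) (51 * n) ^ 6 *
      Ring.inverse (factor (1 : R) (3 * n) * factor (1 : R) (17 * n)) := by
  have h3 : ω ^ 3 = 1 := by linear_combination (ω - 1) * hω
  have hmul : ω * ω ^ 2 = 1 := by linear_combination (ω - 1) * hω
  have huω : IsUnit ω := IsUnit.of_mul_eq_one _ hmul
  have hinv : Ring.inverse ω = ω ^ 2 := by
    calc Ring.inverse ω = Ring.inverse ω * (ω * ω ^ 2) := by rw [hmul, mul_one]
      _ = Ring.inverse ω * ω * ω ^ 2 := by ring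
      _ = ω ^ 2 := by rw [Ring.inverse_mul_cancel _ huω, one_mul]
  -- powers of ω
  have p4 : ω ^ 4 = ω := by linear_combination ω * h3
  have p8 : ω ^ 8 = ω ^ 2 := by linear_combination (ω ^ 2 * (ω ^ 3 + 1)) * h3
  have p10 : ω ^ 10 = ω := by linear_combination (ω * (ω ^ 6 + ω ^ 3 + 1)) * h3
  have p14 : ω ^ 14 = ω ^ 2 := by
    linear_combination (ω ^ 2 * (ω ^ 9 + ω ^ 6 + ω ^ 3 + 1)) * h3
  have p16 : ω ^ 16 = ω := by
    linear_combination (ω * (ω ^ 12 + ω ^ 9 + ω ^ 6 + ω ^ 3 + 1)) * h3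
  have q2 : (ω ^ 2) ^ 2 = ω := by rw [← pow_mul]; linear_combination ω * h3
  have q4 : (ω ^ 2) ^ 4 = ω ^ 2 := by
    rw [← pow_mul]; linear_combination (ω ^ 2 * (ω ^ 3 + 1)) * h3
  have q8 : (ω ^ 2) ^ 8 = ω := by
    rw [← pow_mul]
    linear_combination (ω * (ω ^ 12 + ω ^ 9 + ω ^ 6 + ω ^ 3 + 1)) * h3
  have q10 : (ω ^ 2) ^ 10 = ω ^ 2 := by
    rw [← pow_mul]
    linear_combination (ω ^ 2 * (ω ^ 15 + ω ^ 12 + ω ^ 9 + ω ^ 6 + ω ^ 3 + 1)) * h3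
  have q14 : (ω ^ 2) ^ 14 = ω := by
    rw [← pow_mul]
    linear_combination (ω * (ω ^ 24 + ω ^ 21 + ω ^ 18 + ω ^ 15 + ω ^ 12 + ω ^ 9 + ω ^ 6
      + ω ^ 3 + 1)) * h3
  have q16 : (ω ^ 2) ^ 16 = ω ^ 2 := by
    rw [← pow_mul]
    linear_combination (ω ^ 2 * (ω ^ 27 + ω ^ 24 + ω ^ 21 + ω ^ 18 + ω ^ 15 + ω ^ 12 + ω ^ 9
      + ω ^ 6 + ω ^ 3 + 1)) * h3
  refine congrArg infiniteProd (funext fun n => ?_)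
  simp only [hinv, p4, p8, p10, p14, p16, q2, q4, q8, q10, q14, q16]
  rcases Nat.eq_zero_or_pos n with hn | hn
  · subst hn
    simp [factor]
  · have hn' : n ≠ 0 := hn.ne'
    have h17 : 17 * n ≠ 0 := by positivity
    have h3n : 3 * n ≠ 0 := by positivity
    have h51 : 51 * n ≠ 0 := by positivity
    set a1 := factor ω n
    set b1 := factor (ω ^ 2) n
    set c1 := factor (1 : R) n
    set a := factor ω (17 * n)
    set b := factor (ω ^ 2) (17 * n)
    set c := factor (1 : R) (17 * n)
    set c3 := factor (1 : R) (3 * n)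
    set c51 := factor (1 : R) (51 * n)
    have key1 : a1 * b1 * c1 = c3 := cube_factor ω hω n
    have key17 : a * b * c = c51 := by
      have := cube_factor ω hω (17 * n)
      rwa [show 3 * (17 * n) = 51 * n by ring] at this
    have hu : IsUnit (a1 * b1) := (isUnit_factor _ hn').mul (isUnit_factor _ hn')
    have hw : IsUnit (c3 * c) := (isUnit_factor _ h3n).mul (isUnit_factor _ h17)
    apply inv_helper hu hw
    linear_combination (c1 * c3 * ((a*b*c)^5 + (a*b*c)^4 * c51 + (a*b*c)^3 * c51^2
      + (a*b*c)^2 * c51^3 + (a*b*c) * c51^4 + c51^5)) * key17 - c1 * c51^6 * key1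
end
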